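/- arXiv:1208.3909 — 5 statements merged into one kernel-verified Lean document; each statement's English description precedes it below -/
import Mathlib

section
/- Let p be a prime, m > 1 an integer prime to p, and let M/K be a Z/m-Galois extension of complete discrete valuation fields of characteristic (0,p), with K containing the p-th roots of unity. Let a ∈ M^× \ (M^×)^p and L = M(a^{1/p}). If L/K is Galois with group G ≅ Z/p ⋊ Z/m non-commutative, then p divides v_M(a), where v_M is the normalized valuation on M. -/
open IsLocalRing IsDedekindDomain Multiplicative

section StmtAux

variable (B : Type*) [CommRing B] [IsDomain B] [IsDiscreteValuationRing B]

/-- The height-one spectrum element given by the maximal ideal of a DVR. -/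
noncomputable def stmt1.vB : HeightOneSpectrum B :=
  ⟨maximalIdeal B, (maximalIdeal.isMaximal B).isPrime, IsDiscreteValuationRing.not_a_field B⟩

variable {B}

lemma stmt1.intVal_unit {u : B} (hu : IsUnit u) : (stmt1.vB B).intValuation u = 1 := by
  obtain ⟨w, rfl⟩ := hu
  have h1 : (stmt1.vB B).intValuation (w : B) * (stmt1.vB B).intValuation ((w⁻¹ : Bˣ) : B) = 1 := by
    rw [← Valuation.map_mul, Units.mul_inv, Valuation.map_one]
  have hle : (stmt1.vB B).intValuation (w : B) ≤ 1 := (stmt1.vB B).intValuation_le_one _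
  have hle' : (stmt1.vB B).intValuation ((w⁻¹ : Bˣ) : B) ≤ 1 :=
    (stmt1.vB B).intValuation_le_one _
  refine le_antisymm hle ?_
  calc (1 : WithZero (Multiplicative ℤ)) = _ * _ := h1.symm
    _ ≤ (stmt1.vB B).intValuation (w : B) * 1 := mul_le_mul_right hle' _
    _ = (stmt1.vB B).intValuation (w : B) := mul_one _

lemma stmt1.intVal_irred {ϖ : B} (h : Irreducible ϖ) :
    (stmt1.vB B).intValuation ϖ = ofAdd (-1 : ℤ) :=
  (stmt1.vB B).intValuation_singleton h.ne_zero
    ((IsDiscreteValuationRing.irreducible_iff_uniformizer ϖ).mp h)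

lemma stmt1.intVal_equiv (ψ : B ≃+* B) (b : B) :
    (stmt1.vB B).intValuation (ψ b) = (stmt1.vB B).intValuation b := by
  rcases eq_or_ne b 0 with rfl | hb
  · simp
  obtain ⟨ϖ, hϖ⟩ := IsDiscreteValuationRing.exists_irreducible B
  obtain ⟨n, u, rfl⟩ := IsDiscreteValuationRing.eq_unit_mul_pow_irreducible hb hϖ
  have hψϖ : Irreducible (ψ ϖ) := (MulEquiv.irreducible_iff ψ.toMulEquiv).mpr hϖ
  rw [map_mul, map_pow, Valuation.map_mul, Valuation.map_mul, Valuation.map_pow,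
    Valuation.map_pow, stmt1.intVal_unit u.isUnit, stmt1.intVal_unit (u.isUnit.map ψ),
    stmt1.intVal_irred hϖ, stmt1.intVal_irred hψϖ]

lemma stmt1.val_equiv {M : Type*} [Field M] [Algebra B M] [IsFractionRing B M]
    (φ : M ≃+* M) (ψ : B ≃+* B)
    (hcomp : ∀ b : B, φ (algebraMap B M b) = algebraMap B M (ψ b)) (x : M) :
    (stmt1.vB B).valuation M (φ x) = (stmt1.vB B).valuation M x := by
  obtain ⟨⟨b, s⟩, rfl⟩ := IsLocalization.mk'_surjective (nonZeroDivisors B) x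
  have hs' : ψ (s : B) ∈ nonZeroDivisors B :=
    mem_nonZeroDivisors_of_ne_zero
      ((map_ne_zero_iff ψ ψ.injective).mpr (nonZeroDivisors.ne_zero s.2))
  have hφ : φ (IsLocalization.mk' M b s) = IsLocalization.mk' M (ψ b) ⟨ψ (s : B), hs'⟩ := by
    rw [IsLocalization.eq_mk'_iff_mul_eq]
    calc φ (IsLocalization.mk' M b s) * algebraMap B M (ψ (s : B))
        = φ (IsLocalization.mk' M b s) * φ (algebraMap B M (s : B)) := by rw [hcomp]
      _ = φ (IsLocalization.mk' M b s * algebraMap B M (s : B)) := (map_mul φ _ _).symm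
      _ = φ (algebraMap B M b) := by rw [IsLocalization.mk'_spec]
      _ = algebraMap B M (ψ b) := hcomp b
  rw [hφ, IsDedekindDomain.HeightOneSpectrum.valuation_of_mk',
    IsDedekindDomain.HeightOneSpectrum.valuation_of_mk']
  simp only [stmt1.intVal_equiv ψ]

end StmtAux

section RestrictAut

variable {A M B : Type*} [CommRing A] [Field M] [CommRing B]
  [Algebra A M] [Algebra B M] [Algebra A B] [IsScalarTower A B M] [IsIntegralClosure B A M]

lemma stmt1.integral_map (f : M →ₐ[A] M) (b : B) : IsIntegral A (f (algebraMap B M b)) :=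
  ((IsIntegralClosure.isIntegral_iff (A := B) (R := A) (B := M)).mpr ⟨b, rfl⟩).map f

/-- Restriction of an `A`-algebra endomorphism of `M` to the integral closure `B` of `A`
in `M`, as a ring hom. -/
noncomputable def stmt1.toB (f : M →ₐ[A] M) : B →+* B where
  toFun b := IsIntegralClosure.mk' B (f (algebraMap B M b)) (stmt1.integral_map f b)
  map_one' := by
    apply IsIntegralClosure.algebraMap_injective B A M
    simp
  map_mul' x y := by
    apply IsIntegralClosure.algebraMap_injective B A M
    simp
  map_zero' := by
    apply IsIntegralClosure.algebraMap_injective B A M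
    simp
  map_add' x y := by
    apply IsIntegralClosure.algebraMap_injective B A M
    simp

lemma stmt1.algebraMap_toB (f : M →ₐ[A] M) (b : B) :
    algebraMap B M (stmt1.toB (A := A) f b) = f (algebraMap B M b) :=
  IsIntegralClosure.algebraMap_mk' (A := B) (R := A) _ (stmt1.integral_map f b)

/-- Restriction of an `A`-algebra automorphism of `M` to the integral closure `B` of `A`
in `M`. -/
noncomputable def stmt1.restrictAut (φ : M ≃ₐ[A] M) : B ≃+* B :=
  RingEquiv.ofRingHom (stmt1.toB (A := A) φ.toAlgHom) (stmt1.toB (A := A) φ.symm.toAlgHom)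
    (by
      ext b
      apply IsIntegralClosure.algebraMap_injective B A M
      simp [stmt1.algebraMap_toB])
    (by
      ext b
      apply IsIntegralClosure.algebraMap_injective B A M
      simp [stmt1.algebraMap_toB])

lemma stmt1.algebraMap_restrictAut (φ : M ≃ₐ[A] M) (b : B) :
    algebraMap B M (stmt1.restrictAut (A := A) φ b) = φ (algebraMap B M b) :=
  stmt1.algebraMap_toB _ _

end RestrictAut

section FieldAux

variable {M L : Type*} [Field M] [Field L] [Algebra M L]

lemma stmt1.ext_of_adjoin {γ : L} (hγ : Algebra.adjoin M ({γ} : Set L) = ⊤)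
    {g₁ g₂ : L ≃ₐ[M] L} (h : g₁ γ = g₂ γ) : g₁ = g₂ := by
  have hle : Algebra.adjoin M ({γ} : Set L) ≤ AlgHom.equalizer g₁.toAlgHom g₂.toAlgHom :=
    Algebra.adjoin_le (by simpa using h)
  ext x
  exact hle (hγ ▸ Algebra.mem_top)

lemma stmt1.exists_of_fixed [FiniteDimensional M L] {p : ℕ}
    (hrank : Module.finrank M L = p) (σ' : L ≃ₐ[M] L) (hord : orderOf σ' = p)
    {t : L} (ht : σ' t = t) : ∃ β : M, algebraMap M L β = t := by
  classical
  set H := Subgroup.zpowers σ' with hH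
  have hcard : Fintype.card H = p := by rw [Fintype.card_zpowers, hord]
  have hfr : Module.finrank (IntermediateField.fixedField H) L = p := by
    rw [IntermediateField.finrank_fixedField_eq_card, Nat.card_eq_fintype_card, hcard]
  have htower : Module.finrank M (IntermediateField.fixedField H) *
      Module.finrank (IntermediateField.fixedField H) L = Module.finrank M L :=
    Module.finrank_mul_finrank _ _ _
  have hppos : 0 < p := by
    rw [← hfr]; exact Module.finrank_pos
  have h1 : Module.finrank M (IntermediateField.fixedField H) = 1 := by
    rw [hfr, hrank] at htower
    exact Nat.eq_of_mul_eq_mul_right hppos (htower.trans (one_mul p).symm)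
  have hbot : IntermediateField.fixedField H = ⊥ :=
    IntermediateField.finrank_eq_one_iff.mp h1
  have hstab : H ≤ MulAction.stabilizer (L ≃ₐ[M] L) t := by
    rw [hH, Subgroup.zpowers_le]
    exact ht
  have htH : t ∈ IntermediateField.fixedField H := fun g => hstab g.2
  rw [hbot] at htH
  exact IntermediateField.mem_bot.mp htH

variable {K : Type*} [Field K] [Algebra K M] [Algebra K L] [IsScalarTower K M L]

/-- A `K`-automorphism of `L` fixing `M` pointwise, as an `M`-automorphism. -/
def stmt1.toM (g : L ≃ₐ[K] L)
    (hg : ∀ x : M, g (algebraMap M L x) = algebraMap M L x) : L ≃ₐ[M] L :=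
  AlgEquiv.ofRingEquiv (f := g.toRingEquiv) hg

@[simp] lemma stmt1.toM_apply (g : L ≃ₐ[K] L)
    (hg : ∀ x : M, g (algebraMap M L x) = algebraMap M L x) (x : L) :
    stmt1.toM g hg x = g x := rfl

end FieldAux



open IsLocalRing

/-- let `p` be a prime, `m > 1` prime to `p`, and `M/K` a `ℤ/m`-Galois extension
of complete discrete valuation fields of characteristic `(0, p)` (`K = Frac(A)`, `M = Frac(B)`
with `B` the integral closure of the complete DVR `A` in `M`), with `K` containing the `p`-th
roots of unity.  Let `a ∈ M^× \ (M^×)^p` and `L = M(a^{1/p})`.  If `L/K` is Galois with group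
`G ≅ ℤ/p ⋊ ℤ/m` non-commutative, then `p` divides `v_M(a)`, where `v_M` is the normalized
valuation on `M`. -/
theorem stmt1 (p m : ℕ) (hp : p.Prime) (hm : 1 < m) (hmp : Nat.Coprime m p)
    (A : Type*) [CommRing A] [IsDomain A] [IsDiscreteValuationRing A]
    [IsAdicComplete (maximalIdeal A) A]
    (K : Type*) [Field K] [Algebra A K] [IsFractionRing A K] [CharZero K]
    (hres : CharP (ResidueField A) p)
    -- `K` contains the `p`-th roots of unity
    (ζ : K) (hζ : IsPrimitiveRoot ζ p)
    -- `M/K` is a `ℤ/m`-Galois extension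
    (M : Type*) [Field M] [Algebra K M] [IsGalois K M]
    (hMdeg : Nat.card (M ≃ₐ[K] M) = m) (hMcyc : IsCyclic (M ≃ₐ[K] M))
    -- `B`, the valuation ring of `M`, is the integral closure of `A` in `M`
    (B : Type*) [CommRing B] [IsDomain B] [IsDiscreteValuationRing B]
    [Algebra A B] [Algebra B M] [Algebra A M]
    [IsScalarTower A B M] [IsScalarTower A K M]
    [IsFractionRing B M] [IsIntegralClosure B A M]
    -- `a ∈ M^× \ (M^×)^p`
    (a : M) (ha : a ≠ 0) (hap : ¬ ∃ x : M, x ^ p = a)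
    -- `L = M(a^{1/p})`
    (L : Type*) [Field L] [Algebra M L] [Algebra K L] [IsScalarTower K M L]
    (α : L) (hα : α ^ p = algebraMap M L a)
    (hgen : Algebra.adjoin M ({α} : Set L) = ⊤)
    -- `L/K` is Galois with group `ℤ/p ⋊ ℤ/m`, non-commutative
    [IsGalois K L] (hLdeg : Nat.card (L ≃ₐ[K] L) = p * m)
    (hnoncomm : ¬ ∀ σ τ : (L ≃ₐ[K] L), σ * τ = τ * σ) :
    -- conclusion: `p ∣ v_M(a)` for the normalized valuation `v_M` on `M`
    ∃ k : ℤ, (p : ℤ) ∣ k ∧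
      (IsDedekindDomain.HeightOneSpectrum.valuation M
        (⟨maximalIdeal B, (maximalIdeal.isMaximal B).isPrime,
          IsDiscreteValuationRing.not_a_field B⟩ :
            IsDedekindDomain.HeightOneSpectrum B)) a =
        ((Multiplicative.ofAdd k : Multiplicative ℤ) : WithZero (Multiplicative ℤ)) := by
  classical
  haveI : NeZero p := ⟨hp.ne_zero⟩
  haveI := Fact.mk hp
  show ∃ k : ℤ, (p : ℤ) ∣ k ∧ (stmt1.vB B).valuation M a =
    ((Multiplicative.ofAdd k : Multiplicative ℤ) : WithZero (Multiplicative ℤ))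
  -- basic nonvanishing
  have hι : Function.Injective (algebraMap M L) := (algebraMap M L).injective
  have hιa : algebraMap M L a ≠ 0 := fun h => ha (hι (by rw [h, map_zero]))
  have hα0 : α ≠ 0 := fun h => hιa (by rw [← hα, h, zero_pow hp.ne_zero])
  -- the Galois group and the kernel of restriction
  have hGfin : Finite (L ≃ₐ[K] L) :=
    Nat.finite_of_card_ne_zero (by rw [hLdeg]; exact Nat.mul_ne_zero hp.ne_zero (by omega))
  set f : (L ≃ₐ[K] L) →* (M ≃ₐ[K] M) := AlgEquiv.restrictNormalHom M with hf
  have hfsurj : Function.Surjective f := AlgEquiv.restrictNormalHom_surjective L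
  set N := f.ker with hN
  have hNfix : ∀ g : L ≃ₐ[K] L, g ∈ N → ∀ x : M,
      g (algebraMap M L x) = algebraMap M L x := by
    intro g hg x
    have h1 := AlgEquiv.restrictNormal_commutes g M x
    have h2 : g.restrictNormal M = 1 := hg
    rw [← h1, h2, AlgEquiv.one_apply]
  -- a noncommuting pair
  obtain ⟨c, σ, hσN, hcσ⟩ : ∃ c σ : L ≃ₐ[K] L, σ ∈ N ∧ c * σ ≠ σ * c := by
    by_contra h
    push_neg at h
    exact hnoncomm (commutative_of_cyclic_center_quotient f
      (fun σ hσ => Subgroup.mem_center_iff.mpr (fun g => h g σ hσ)))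
  have hσne1 : σ ≠ 1 := fun h => hcσ (by rw [h, mul_one, one_mul])
  -- degree of L over M
  have haM : ∀ b : M, b ^ p ≠ a := fun b hb => hap ⟨b, hb⟩
  have hirr : Irreducible (Polynomial.X ^ p - Polynomial.C a) :=
    X_pow_sub_C_irreducible_of_prime hp haM
  have hαroot : Polynomial.aeval α (Polynomial.X ^ p - Polynomial.C a) = 0 := by
    rw [map_sub, map_pow, Polynomial.aeval_X, Polynomial.aeval_C, hα, sub_self]
  have hmonic := Polynomial.monic_X_pow_sub_C a hp.ne_zero
  have hint : IsIntegral M α :=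
    ⟨_, hmonic, by rw [← Polynomial.aeval_def]; exact hαroot⟩
  have hmin : minpoly M α = Polynomial.X ^ p - Polynomial.C a :=
    (minpoly.eq_of_irreducible_of_monic hirr hαroot hmonic).symm
  have hadj : (IntermediateField.adjoin M ({α} : Set L)) = ⊤ := by
    apply IntermediateField.toSubalgebra_injective
    rw [IntermediateField.adjoin_simple_toSubalgebra_of_isAlgebraic hint.isAlgebraic, hgen,
      IntermediateField.top_toSubalgebra]
  have hfd : FiniteDimensional M L := by
    have h1 := IntermediateField.adjoin.finiteDimensional hint
    rw [hadj] at h1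
    exact (IntermediateField.topEquiv (F := M) (E := L)).toLinearEquiv.finiteDimensional
  have hrank : Module.finrank M L = p := by
    have h1 : Module.finrank M (IntermediateField.adjoin M ({α} : Set L)) = p := by
      rw [IntermediateField.adjoin.finrank hint, hmin, Polynomial.natDegree_X_pow_sub_C]
    rw [hadj] at h1
    exact ((IntermediateField.topEquiv (F := M) (E := L)).toLinearEquiv.finrank_eq).symm.trans h1
  -- the primitive root in L
  set ζL : L := algebraMap K L ζ with hζLdef
  have hζL : IsPrimitiveRoot ζL p := hζ.map_of_injective (algebraMap K L).injective
  -- roots of unity attached to elements of N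
  have hroot : ∀ g : L ≃ₐ[K] L, g ∈ N → ∃ i : ℕ, g α = ζL ^ i * α := by
    intro g hg
    have h1 : (g α) ^ p = α ^ p := by
      rw [← map_pow, hα, hNfix g hg a]
    have h2 : (g α / α) ^ p = 1 := by
      rw [div_pow, h1, div_self (pow_ne_zero _ hα0)]
    obtain ⟨i, -, hi⟩ := hζL.eq_pow_of_pow_eq_one h2
    exact ⟨i, by rw [hi, div_mul_cancel₀ _ hα0]⟩
  obtain ⟨s, hs⟩ := hroot σ hσN
  -- τ = c⁻¹ σ c
  set τ : L ≃ₐ[K] L := c⁻¹ * σ * c with hτdef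
  have hτN : τ ∈ N := by
    have h1 : f τ = (f c)⁻¹ * f σ * f c := by rw [hτdef, map_mul, map_mul, map_inv]
    have h2 : f σ = 1 := hσN
    rw [MonoidHom.mem_ker, h1, h2, mul_one, inv_mul_cancel]
  obtain ⟨w, hw⟩ := hroot τ hτN
  -- M-algebra versions
  set σ' : L ≃ₐ[M] L := stmt1.toM σ (hNfix σ hσN) with hσ'def
  set τ' : L ≃ₐ[M] L := stmt1.toM τ (hNfix τ hτN) with hτ'def
  have hσζ : ∀ nn : ℕ, σ' (ζL ^ nn) = ζL ^ nn := by
    intro nn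
    rw [map_pow]
    congr 1
    rw [hζLdef, IsScalarTower.algebraMap_apply K M L]
    exact σ'.commutes _
  -- ζL ^ s ≠ 1
  have hζs1 : ζL ^ s ≠ 1 := by
    intro h
    apply hσne1
    have hσ'1 : σ' = 1 := stmt1.ext_of_adjoin hgen
      (by rw [stmt1.toM_apply, hs, h, one_mul, AlgEquiv.one_apply])
    ext x
    rw [← stmt1.toM_apply σ (hNfix σ hσN) x, ← hσ'def, hσ'1, AlgEquiv.one_apply]
    exact (AlgEquiv.one_apply x).symm
  have hps : ¬ p ∣ s := fun hd => hζs1 ((hζL.pow_eq_one_iff_dvd s).mpr hd)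
  have hcop : s.Coprime p := Nat.coprime_comm.mp (hp.coprime_iff_not_dvd.mpr hps)
  have hprim_s : IsPrimitiveRoot (ζL ^ s) p := hζL.pow_of_coprime s hcop
  -- express ζL ^ w as a power of ζL ^ s
  obtain ⟨j, -, hj⟩ := hprim_s.eq_pow_of_pow_eq_one
    (show (ζL ^ w) ^ p = 1 by rw [← pow_mul, mul_comm, pow_mul, hζL.pow_eq_one, one_pow])
  -- τ ≠ σ
  have hτσ : τ ≠ σ := by
    intro h
    apply hcσ
    have h2 := congrArg (fun x => c * x) h
    simp only [hτdef, ← mul_assoc, mul_inv_cancel, one_mul] at h2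
    exact h2.symm
  have hwne : ζL ^ w ≠ ζL ^ s := by
    intro h
    apply hτσ
    have hττ' : τ' = σ' := stmt1.ext_of_adjoin hgen
      (by rw [stmt1.toM_apply, stmt1.toM_apply, hw, hs, h])
    ext x
    rw [← stmt1.toM_apply τ (hNfix τ hτN) x, ← stmt1.toM_apply σ (hNfix σ hσN) x,
      ← hτ'def, ← hσ'def, hττ']
  -- j ≢ 1 (mod p)
  have hxp : (ζL ^ s) ^ p = 1 := hprim_s.pow_eq_one
  have hζs0 : ζL ^ s ≠ 0 := pow_ne_zero _ (hζL.ne_zero hp.ne_zero)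
  have hj1' : ¬ ((p : ℤ) ∣ (j : ℤ) - 1) := by
    intro hd
    obtain ⟨d, hdd⟩ := hd
    have hzp : (ζL ^ s) ^ ((j : ℤ)) = (ζL ^ s) ^ ((1 : ℤ) + p * d) := by
      rw [show ((j : ℤ)) = 1 + p * d by linarith]
    rw [zpow_natCast, zpow_add₀ hζs0, zpow_one, zpow_mul, zpow_natCast, hxp, one_zpow,
      mul_one] at hzp
    rw [hj] at hzp
    exact hwne hzp
  -- order of σ'
  have hσ'pow : ∀ n : ℕ, (σ' ^ n) α = ζL ^ (s * n) * α := by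
    intro n
    induction n with
    | zero => simp
    | succ n ih =>
      rw [pow_succ', AlgEquiv.mul_apply, ih, map_mul, hσζ (s * n), stmt1.toM_apply, hs,
        ← mul_assoc, ← pow_add, Nat.mul_succ]
  have hσ'p : σ' ^ p = 1 := by
    apply stmt1.ext_of_adjoin hgen
    rw [hσ'pow p, AlgEquiv.one_apply, mul_comm s p, pow_mul, hζL.pow_eq_one, one_pow, one_mul]
  have hσ'ne1 : σ' ≠ 1 := by
    intro h
    apply hζs1
    have h2 : σ' α = α := by rw [h, AlgEquiv.one_apply]
    rw [stmt1.toM_apply, hs] at h2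
    field_simp at h2
    exact h2
  have hord : orderOf σ' = p := orderOf_eq_prime hσ'p hσ'ne1
  -- σ (c α) = ζL ^ w * c α
  have hcζ : c ζL = ζL := c.commutes ζ
  have hστ : σ (c α) = c (τ α) := by
    have h1 : c * τ = σ * c := by rw [hτdef]; group
    have h2 := congrArg (fun g : L ≃ₐ[K] L => g α) h1
    simpa [AlgEquiv.mul_apply] using h2.symm
  have hσcα : σ (c α) = ζL ^ w * c α := by
    rw [hστ, hw, map_mul, map_pow, hcζ]
  -- the fixed element t
  have hcα0 : c α ≠ 0 := fun h => hα0 (by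
    have := c.injective (h.trans (map_zero c).symm)
    exact this)
  have hαj0 : α ^ j ≠ 0 := pow_ne_zero _ hα0
  have hζw0 : ζL ^ w ≠ 0 := pow_ne_zero _ (hζL.ne_zero hp.ne_zero)
  set t : L := c α * (α ^ j)⁻¹ with htdef
  have hσ't : σ' t = t := by
    have h1 : σ' (α ^ j) = ζL ^ w * α ^ j := by
      rw [map_pow, stmt1.toM_apply, hs, mul_pow, hj]
    rw [htdef, map_mul, map_inv₀, h1, stmt1.toM_apply, hσcα, mul_inv]
    calc ζL ^ w * c α * ((ζL ^ w)⁻¹ * (α ^ j)⁻¹)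
        = (ζL ^ w * (ζL ^ w)⁻¹) * (c α * (α ^ j)⁻¹) := by ring
      _ = c α * (α ^ j)⁻¹ := by rw [mul_inv_cancel₀ hζw0, one_mul]
  obtain ⟨β, hβ⟩ := stmt1.exists_of_fixed hrank σ' hord hσ't
  have hβ0 : β ≠ 0 := by
    intro h
    rw [h, map_zero] at hβ
    exact hcα0 (by
      have h2 : c α * (α ^ j)⁻¹ = 0 := hβ.symm
      rcases mul_eq_zero.mp h2 with h3 | h3
      · exact h3
      · exact absurd h3 (inv_ne_zero hαj0))
  have hcαt : c α = algebraMap M L β * α ^ j := by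
    rw [hβ, htdef, inv_mul_cancel_right₀ hαj0]
  -- the key equation in M
  set cb : M ≃ₐ[K] M := f c with hcb
  have hβa : cb a = β ^ p * a ^ j := by
    apply hι
    have h1 : algebraMap M L (cb a) = c (algebraMap M L a) :=
      AlgEquiv.restrictNormal_commutes c M a
    calc algebraMap M L (cb a) = c (algebraMap M L a) := h1
      _ = c (α ^ p) := by rw [hα]
      _ = (c α) ^ p := map_pow c α p
      _ = (algebraMap M L β * α ^ j) ^ p := by rw [hcαt]
      _ = algebraMap M L β ^ p * (α ^ p) ^ j := by
          rw [mul_pow, ← pow_mul, ← pow_mul, mul_comm j p]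
      _ = algebraMap M L (β ^ p * a ^ j) := by rw [hα, map_mul, map_pow, map_pow]
  -- valuations
  set v := stmt1.vB B with hv
  have hvinv : v.valuation M (cb a) = v.valuation M a := by
    have := stmt1.val_equiv (B := B) (M := M) (cb.restrictScalars A).toRingEquiv
      (stmt1.restrictAut (A := A) (cb.restrictScalars A))
      (fun b => (stmt1.algebraMap_restrictAut (A := A) (cb.restrictScalars A) b).symm) a
    exact this
  have hva0 : v.valuation M a ≠ 0 := (Valuation.ne_zero_iff _).mpr ha
  have hvβ0 : v.valuation M β ≠ 0 := (Valuation.ne_zero_iff _).mpr hβ0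
  obtain ⟨ku, hku⟩ := WithZero.ne_zero_iff_exists.mp hva0
  obtain ⟨lu, hlu⟩ := WithZero.ne_zero_iff_exists.mp hvβ0
  set k : ℤ := Multiplicative.toAdd ku with hk
  set l : ℤ := Multiplicative.toAdd lu with hl
  have hmuleq : v.valuation M a = v.valuation M β ^ p * v.valuation M a ^ j := by
    conv_lhs => rw [← hvinv, hβa]
    rw [Valuation.map_mul, Valuation.map_pow, Valuation.map_pow]
  have hmul2 : ku = lu ^ p * ku ^ j := by
    have h2 : (↑ku : WithZero (Multiplicative ℤ)) = ↑(lu ^ p * ku ^ j) := by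
      rw [WithZero.coe_mul, WithZero.coe_pow, WithZero.coe_pow, hku, hlu]
      exact hmuleq
    exact_mod_cast h2
  have hkeq : k = (p : ℤ) * l + (j : ℤ) * k := by
    have h2 := congrArg Multiplicative.toAdd hmul2
    simp only [toAdd_mul, toAdd_pow, nsmul_eq_mul] at h2
    rw [hk, hl]; linarith
  have hdvd : (p : ℤ) ∣ ((j : ℤ) - 1) * k := ⟨-l, by linear_combination -hkeq⟩
  have hpk : (p : ℤ) ∣ k := by
    rcases (Nat.prime_iff_prime_int.mp hp).dvd_mul.mp hdvd with h2 | h2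
    · exact absurd h2 hj1'
    · exact h2
  exact ⟨k, hpk, by rw [← hku, hk, ofAdd_toAdd]⟩
end

section
/- Let p be a prime, n ≥ 1, and let K be a field of characteristic 0 containing a primitive p^n-th root of unity. Suppose a, b ∈ K^× are such that K(a^{1/p^n}) = K(b^{1/p^n}) =: L and [L : K] = p^n. Then there exist an integer r with p ∤ r and c ∈ K^× such that b = a^r · c^{p^n}. -/
open Polynomial IntermediateField in
/-- Kummer-theoretic comparison of two generators of the same cyclic degree-`p^n`
Kummer extension: if `K` is a characteristic-zero field containing a primitive `p^n`-th root of
unity and `K(a^{1/p^n}) = K(b^{1/p^n}) = L` with `[L : K] = p^n`, then `b = a^r * c^{p^n}` for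
some integer `r` prime to `p` and some `c ∈ Kˣ`. -/
theorem stmt3 (p : ℕ) (hp : p.Prime) (n : ℕ) (hn : 1 ≤ n)
    (K : Type*) [Field K] [CharZero K]
    (ζ : K) (hζ : IsPrimitiveRoot ζ (p ^ n))
    (a b : K) (ha : a ≠ 0) (hb : b ≠ 0)
    (L : Type*) [Field L] [Algebra K L]
    (α β : L)
    (hα : α ^ (p ^ n) = algebraMap K L a)
    (hβ : β ^ (p ^ n) = algebraMap K L b)
    (hgenα : Algebra.adjoin K ({α} : Set L) = ⊤)
    (hgenβ : Algebra.adjoin K ({β} : Set L) = ⊤)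
    (hdeg : Module.finrank K L = p ^ n) :
    ∃ (r : ℤ) (c : K), ¬ (p : ℤ) ∣ r ∧ c ≠ 0 ∧ b = a ^ r * c ^ (p ^ n) := by
  classical
  have hp1 : 1 < p := hp.one_lt
  set N := p ^ n with hNdef
  have hNpos : 0 < N := pow_pos hp.pos n
  haveI : NeZero N := ⟨hNpos.ne'⟩
  haveI : FiniteDimensional K L := FiniteDimensional.of_finrank_pos (by rw [hdeg]; exact hNpos)
  have hζ' : IsPrimitiveRoot ((algebraMap K L) ζ) N :=
    hζ.map_of_injective (algebraMap K L).injective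
  have hα0 : α ≠ 0 := by
    intro h
    apply ha
    have := hα
    rw [h, zero_pow hNpos.ne'] at this
    exact ((algebraMap K L).injective (by simpa using this.symm))
  have hβ0 : β ≠ 0 := by
    intro h
    apply hb
    have := hβ
    rw [h, zero_pow hNpos.ne'] at this
    exact ((algebraMap K L).injective (by simpa using this.symm))
  have hαK : K⟮α⟯ = ⊤ := by
    apply IntermediateField.toSubalgebra_injective
    rw [IntermediateField.adjoin_simple_toSubalgebra_of_isAlgebraic (IsIntegral.of_finite K α).isAlgebraic,
      hgenα, IntermediateField.top_toSubalgebra]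
  have ha' : α ^ (Module.finrank K L) = algebraMap K L a := by rw [hdeg]; exact hα
  have Hirr : Irreducible (X ^ N - C a) := by
    have := irreducible_X_pow_sub_C_of_root_adjoin_eq_top ha' hαK
    rwa [hdeg] at this
  have hprim : (primitiveRoots N K).Nonempty := ⟨ζ, (mem_primitiveRoots hNpos).mpr hζ⟩
  haveI Hsf : IsSplittingField K L (X ^ N - C a) := by
    have hK : (primitiveRoots (Module.finrank K L) K).Nonempty := by rw [hdeg]; exact hprim
    have := isSplittingField_X_pow_sub_C_of_root_adjoin_eq_top hK ha' hαK
    rwa [hdeg] at this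
  haveI : IsGalois K L := isGalois_of_isSplittingField_X_pow_sub_C hprim Hirr L
  set e := autEquivZmod Hirr L hζ with he
  set σ : L ≃ₐ[K] L := e.symm (Multiplicative.ofAdd (1 : ZMod N)) with hσdef
  have hσα : σ α = algebraMap K L ζ * α := by
    have := autEquivZmod_symm_apply_natCast Hirr L hα hζ 1
    simpa [Algebra.smul_def] using this
  -- σ β = ζ'^r β for some r < N
  have hηpow : (σ β * β⁻¹) ^ N = 1 := by
    rw [mul_pow, inv_pow, ← map_pow, hβ, AlgEquiv.commutes]
    exact mul_inv_cancel₀ (fun h => hb ((algebraMap K L).injective (by rw [h, map_zero])))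
  obtain ⟨r, hrN, hr⟩ := hζ'.eq_pow_of_pow_eq_one hηpow
  have hσβ : σ β = (algebraMap K L ζ) ^ r * β := by
    rw [hr, inv_mul_cancel_right₀ hβ0]
  -- iteration formulas
  have hpowα : ∀ j : ℕ, (σ ^ j) α = (algebraMap K L ζ) ^ j * α := by
    intro j
    induction j with
    | zero => simp
    | succ j ih =>
      rw [pow_succ, AlgEquiv.mul_apply, hσα, map_mul, AlgEquiv.commutes, ih, pow_succ]
      ring
  have hpowβ : ∀ j : ℕ, (σ ^ j) β = (algebraMap K L ζ) ^ (r * j) * β := by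
    intro j
    induction j with
    | zero => simp
    | succ j ih =>
      rw [pow_succ, AlgEquiv.mul_apply, hσβ, map_mul, map_pow, AlgEquiv.commutes, ih,
        Nat.mul_succ, pow_add]
      ring
  -- p does not divide r
  have hpr : ¬ p ∣ r := by
    rintro ⟨s, rfl⟩
    have h1 : (σ ^ (p ^ (n - 1))) β = β := by
      have hmul : p * s * p ^ (n - 1) = s * N := by
        conv_rhs => rw [hNdef, ← Nat.sub_add_cancel hn]
        rw [pow_succ]
        ring
      rw [hpowβ, hmul, pow_mul', ← map_pow, hζ.pow_eq_one, map_one, one_pow, one_mul]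
    have h2 : ∀ x : L, (σ ^ (p ^ (n - 1))) x = x := by
      intro x
      have hx : x ∈ Algebra.adjoin K ({β} : Set L) := hgenβ ▸ Algebra.mem_top
      induction hx using Algebra.adjoin_induction with
      | mem y hy => rw [Set.mem_singleton_iff] at hy; subst hy; exact h1
      | algebraMap c => exact AlgEquiv.commutes _ c
      | add x y _ _ hx hy => rw [map_add, hx, hy]
      | mul x y _ _ hx hy => rw [map_mul, hx, hy]
    have h3 := h2 α
    rw [hpowα] at h3
    have h4 : (algebraMap K L ζ) ^ (p ^ (n - 1)) = 1 :=
      mul_right_cancel₀ hα0 (by rw [h3, one_mul])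
    exact hζ'.pow_ne_one_of_pos_of_lt (pow_pos hp.pos _).ne'
      (Nat.pow_lt_pow_right hp1 (by omega)) h4
  -- the fixed element γ = β / α^r
  set γ : L := β / α ^ r with hγdef
  have hσγ : σ γ = γ := by
    rw [hγdef, map_div₀, hσβ, map_pow, hσα, mul_pow]
    rw [mul_div_mul_left _ _ (pow_ne_zero r (hζ'.ne_zero hNpos.ne'))]
  have hσpowγ : ∀ m : ℕ, (σ ^ m) γ = γ := by
    intro m
    induction m with
    | zero => simp
    | succ m ih => rw [pow_succ, AlgEquiv.mul_apply, hσγ, ih]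
  have hfix : ∀ τ : L ≃ₐ[K] L, τ γ = γ := by
    intro τ
    obtain ⟨m, rfl⟩ : ∃ m : ℕ, τ = σ ^ m := by
      refine ⟨(Multiplicative.toAdd (e τ)).val, ?_⟩
      apply e.injective
      rw [map_pow, hσdef, MulEquiv.apply_symm_apply]
      rw [← ofAdd_nsmul, nsmul_eq_mul, mul_one]
      simp [ZMod.natCast_val, ZMod.cast_id]
    exact hσpowγ m
  have hγbot : γ ∈ (⊥ : IntermediateField K L) := by
    rw [← IsGalois.fixedField_fixingSubgroup (⊥ : IntermediateField K L)]
    exact fun g => hfix g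
  rw [IntermediateField.mem_bot] at hγbot
  obtain ⟨c, hc⟩ := hγbot
  have hγ0 : γ ≠ 0 := div_ne_zero hβ0 (pow_ne_zero r hα0)
  have hc0 : c ≠ 0 := by
    intro h
    rw [h, map_zero] at hc
    exact hγ0 hc.symm
  have hβeq : β = γ * α ^ r := by
    rw [hγdef, div_mul_cancel₀ _ (pow_ne_zero r hα0)]
  have hbK : b = a ^ r * c ^ N := by
    apply (algebraMap K L).injective
    rw [← hβ, hβeq, mul_pow, ← hc, ← pow_mul, mul_comm r N, pow_mul, hα,
      ← map_pow, ← map_pow, ← map_mul, mul_comm]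
  refine ⟨(r : ℤ), c, ?_, hc0, ?_⟩
  · rw [Int.natCast_dvd_natCast]
    exact hpr
  · rw [zpow_natCast]
    exact hbK
end

section
/- Let K be a complete discrete valuation field of characteristic (0,p) containing a primitive p^n-th root of unity, with residue field κ. Let a, b ∈ K^× with v_K(a) = v_K(b) = 0, and suppose K(a^{1/p^n}) = K(b^{1/p^n}) is a degree-p^n field extension of K. If the image of a in κ is a p-th power in κ, then the image of b in κ is also a p-th power in κ. -/
open IsLocalRing

open Polynomial in
/-- Kummer-theoretic key lemma: if `L = K(α)` has degree `m` over `K`, `α^m = a`,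
`β^m = b` with `b ≠ 0`, and `K` contains a primitive `m`-th root of unity, then
`β = c • α^r` for some `c ∈ K` and `r < m`. -/
lemma stmt4_kummer_aux {K L : Type*} [Field K] [Field L] [Algebra K L]
    {m : ℕ} [NeZero m] {ζ : K} (hζ : IsPrimitiveRoot ζ m)
    {a b : K} {α β : L} (hb : b ≠ 0)
    (hα : α ^ m = algebraMap K L a) (hβ : β ^ m = algebraMap K L b)
    (htopα : IntermediateField.adjoin K ({α} : Set L) = ⊤)
    (hdeg : Module.finrank K L = m) :
    ∃ (r : ℕ) (c : K), r < m ∧ β = algebraMap K L c * α ^ r := by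
  have hm : 0 < m := NeZero.pos m
  have : FiniteDimensional K L := Module.finite_of_finrank_pos (by rw [hdeg]; exact hm)
  have hα' : α ^ Module.finrank K L = algebraMap K L a := by rw [hdeg]; exact hα
  have hK : (primitiveRoots (Module.finrank K L) K).Nonempty :=
    ⟨ζ, by rw [hdeg, mem_primitiveRoots hm]; exact hζ⟩
  have H0 : Irreducible (X ^ Module.finrank K L - C a) :=
    irreducible_X_pow_sub_C_of_root_adjoin_eq_top hα' htopα
  have H : Irreducible (X ^ m - C a) := by rwa [hdeg] at H0
  have hsplit0 := isSplittingField_X_pow_sub_C_of_root_adjoin_eq_top hK hα' htopα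
  rw [hdeg] at hsplit0
  haveI := hsplit0
  haveI : IsGalois K L :=
    isGalois_of_isSplittingField_X_pow_sub_C ⟨ζ, (mem_primitiveRoots hm).mpr hζ⟩ H L
  -- the generator of the Galois group
  set e := autEquivZmod H L hζ with he
  set σ : L ≃ₐ[K] L := e.symm (Multiplicative.ofAdd (1 : ZMod m)) with hσ
  have hσα : σ α = algebraMap K L ζ * α := by
    have := autEquivZmod_symm_apply_natCast H L hα hζ 1
    rwa [pow_one, Algebra.smul_def, Nat.cast_one] at this
  -- β ≠ 0 and α ≠ 0
  have hbL : algebraMap K L b ≠ 0 := by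
    simpa using (map_ne_zero (algebraMap K L)).mpr hb
  have hβ0 : β ≠ 0 := by
    intro h; rw [h, zero_pow hm.ne'] at hβ; exact hbL hβ.symm
  -- σ β / β is an m-th root of unity, hence a power of ζ
  have hζL : IsPrimitiveRoot (algebraMap K L ζ) m :=
    hζ.map_of_injective (algebraMap K L).injective
  have hpow1 : (σ β / β) ^ m = 1 := by
    rw [div_pow, ← map_pow, hβ, AlgEquiv.commutes, div_self hbL]
  obtain ⟨r, hrm, hr⟩ := hζL.eq_pow_of_pow_eq_one hpow1
  have hσβ : σ β = algebraMap K L ζ ^ r * β := by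
    field_simp at hr
    rw [hr]
  -- γ := β / α ^ r is fixed by σ, hence by all of Gal(L/K), hence lies in K
  set γ : L := β / α ^ r with hγ
  have hζr0 : (algebraMap K L ζ) ^ r ≠ 0 :=
    pow_ne_zero _ ((map_ne_zero (algebraMap K L)).mpr (hζ.ne_zero hm.ne'))
  have hσγ : σ γ = γ := by
    rw [hγ, map_div₀, map_pow, hσα, hσβ, mul_pow, ← map_pow]
    exact mul_div_mul_left _ _ (by rwa [map_pow])
  have hfix : ∀ τ : L ≃ₐ[K] L, τ γ = γ := by
    intro τ
    have hτ : τ = σ ^ (Multiplicative.toAdd (e τ)).val := by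
      apply e.injective
      rw [map_pow, hσ, e.apply_symm_apply]
      rw [← ofAdd_nsmul, nsmul_eq_mul, mul_one, ZMod.natCast_val, ZMod.cast_id]
      simp
    rw [hτ]
    generalize (Multiplicative.toAdd (e τ)).val = k
    induction k with
    | zero => simp
    | succ k ih => rw [pow_succ, AlgEquiv.mul_apply, hσγ, ih]
  have hbot : IntermediateField.fixedField (⊤ : Subgroup (L ≃ₐ[K] L)) = ⊥ :=
    OrderIso.map_bot (IsGalois.intermediateFieldEquivSubgroup (F := K) (E := L)).symm
  have hγmem : γ ∈ IntermediateField.fixedField (⊤ : Subgroup (L ≃ₐ[K] L)) := by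
    intro g
    exact hfix g.1
  rw [hbot, IntermediateField.mem_bot] at hγmem
  obtain ⟨c, hc⟩ := hγmem
  refine ⟨r, c, hrm, ?_⟩
  have hαr0 : α ^ r ≠ 0 := by
    rcases Nat.eq_zero_or_pos r with h0 | h0
    · rw [h0, pow_zero]; exact one_ne_zero
    apply pow_ne_zero
    intro h
    rw [h, zero_pow hm.ne'] at hα
    have hane : a ≠ 0 := ne_zero_of_irreducible_X_pow_sub_C'
      (by omega : m ≠ 1) H
    exact hane ((_root_.map_eq_zero (algebraMap K L)).mp hα.symm)
  rw [hc, hγ, div_mul_cancel₀ _ hαr0]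

/-- let `K = Frac(A)` be a complete discrete valuation field of characteristic
`(0, p)` containing a primitive `p^n`-th root of unity, with residue field `κ`.  Let
`a, b ∈ K^×` with `v_K(a) = v_K(b) = 0` (i.e. `a, b` are units of the valuation ring `A`),
and suppose `K(a^{1/p^n}) = K(b^{1/p^n})` is a degree-`p^n` field extension of `K`.  If the
image of `a` in `κ` is a `p`-th power, then so is the image of `b`. -/
theorem stmt4 (p : ℕ) (hp : p.Prime) (n : ℕ) (hn : 1 ≤ n)
    (A : Type*) [CommRing A] [IsDomain A] [IsDiscreteValuationRing A]
    [IsAdicComplete (maximalIdeal A) A]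
    (K : Type*) [Field K] [Algebra A K] [IsFractionRing A K] [CharZero K]
    (hres : CharP (ResidueField A) p)
    (ζ : K) (hζ : IsPrimitiveRoot ζ (p ^ n))
    -- `a, b ∈ K^×` with `v_K(a) = v_K(b) = 0`, i.e. units of `A`
    (a b : A) (ha : IsUnit a) (hb : IsUnit b)
    -- `L = K(a^{1/p^n}) = K(b^{1/p^n})`, of degree `p^n` over `K`
    (L : Type*) [Field L] [Algebra K L]
    (α β : L)
    (hα : α ^ (p ^ n) = algebraMap K L (algebraMap A K a))
    (hβ : β ^ (p ^ n) = algebraMap K L (algebraMap A K b))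
    (hgenα : Algebra.adjoin K ({α} : Set L) = ⊤)
    (hgenβ : Algebra.adjoin K ({β} : Set L) = ⊤)
    (hdeg : Module.finrank K L = p ^ n)
    -- the image of `a` in the residue field is a `p`-th power
    (hared : ∃ x : ResidueField A, x ^ p = residue A a) :
    ∃ y : ResidueField A, y ^ p = residue A b := by
  classical
  have hm : 0 < p ^ n := pow_pos hp.pos n
  haveI : NeZero (p ^ n) := ⟨hm.ne'⟩
  have hinjAK : Function.Injective (algebraMap A K) := IsFractionRing.injective A K
  have hb' : algebraMap A K b ≠ 0 := by
    intro h
    exact hb.ne_zero (hinjAK (by simpa using h))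
  have htopα : IntermediateField.adjoin K ({α} : Set L) = ⊤ := by
    refine (IntermediateField.eq_adjoin_of_eq_algebra_adjoin _ _ _ ?_).symm
    rw [IntermediateField.top_toSubalgebra, hgenα]
  obtain ⟨r, c, hrm, hβc⟩ := stmt4_kummer_aux hζ hb' hα hβ htopα hdeg
  -- from β = c * α^r we get b = a^r * c^(p^n) in K
  have hbK : algebraMap A K b = c ^ (p ^ n) * (algebraMap A K a) ^ r := by
    apply (algebraMap K L).injective
    rw [← hβ, hβc, mul_pow, ← pow_right_comm, hα, map_mul, map_pow, map_pow]
  -- c is integral over A, so c = algebraMap A K c₀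
  set u := ha.unit with hu
  have hainv : algebraMap A K ((u⁻¹ : Aˣ) : A) = (algebraMap A K a)⁻¹ := by
    refine eq_inv_of_mul_eq_one_left ?_
    rw [← map_mul, ← map_one (algebraMap A K)]
    congr 1
    rw [show (a : A) = ((u : Aˣ) : A) from (ha.unit_spec).symm, ← Units.val_mul,
      inv_mul_cancel, Units.val_one]
  set d : A := b * ((u⁻¹ : Aˣ) : A) ^ r with hd
  have hcm : c ^ (p ^ n) = algebraMap A K d := by
    have ha0 : algebraMap A K a ≠ 0 := by
      intro h
      exact ha.ne_zero (hinjAK (by simpa using h))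
    rw [hd, map_mul, map_pow, hainv, hbK, mul_assoc, ← mul_pow,
      mul_inv_cancel₀ ha0, one_pow, mul_one]
  have hcint : IsIntegral A c := by
    refine ⟨Polynomial.X ^ (p ^ n) - Polynomial.C d,
      Polynomial.monic_X_pow_sub_C d hm.ne', ?_⟩
    simp [Polynomial.eval₂_sub, hcm]
  obtain ⟨c₀, hc₀⟩ := IsIntegrallyClosed.isIntegral_iff.mp hcint
  -- b = a^r * c₀^(p^n) in A
  have hbA : b = a ^ r * c₀ ^ (p ^ n) := by
    apply hinjAK
    rw [hbK, map_mul, map_pow, map_pow, hc₀, mul_comm]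
  -- conclude in the residue field
  obtain ⟨x, hx⟩ := hared
  refine ⟨x ^ r * residue A c₀ ^ (p ^ (n - 1)), ?_⟩
  have hpn : p ^ (n - 1) * p = p ^ n := by
    rw [← pow_succ, Nat.sub_add_cancel hn]
  rw [mul_pow, ← pow_mul, ← pow_mul, mul_comm r p, pow_mul, hx, hpn, ← map_pow, ← map_pow,
    ← map_mul, ← hbA]
end

section
/- Let m ≥ 1 be an integer. Let B_new and B_prim be finite sets with |B_prim| = 3, and let σ : B_new ⊔ B_prim → ℚ be such that every σ_b is a positive element of (1/m)ℤ, σ_b ≥ 1 + 1/m for all b ∈ B_new, and 1 = Σ_{b ∈ B_new}(σ_b - 1) + Σ_{b ∈ B_prim} σ_b. Then no σ_b is an integer, and Σ_{b ∈ B_new ⊔ B_prim} ⟨σ_b⟩ = 1, where ⟨·⟩ denotes fractional part. -/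
/-- arithmetic consequence of the vanishing cycles formula for a three-point
cover: if every `σ b` is a positive element of `(1/m)ℤ`, `σ b ≥ 1 + 1/m` on the "new" part,
`|B_prim| = 3`, and `1 = ∑_{new} (σ b - 1) + ∑_{prim} σ b`, then no `σ b` is an integer and
the fractional parts sum to `1`. -/
theorem stmt9 (m : ℕ) (hm : 1 ≤ m)
    (Bnew Bprim : Type*) [Fintype Bnew] [Fintype Bprim]
    (hprim : Fintype.card Bprim = 3)
    (σ : Bnew ⊕ Bprim → ℚ)
    (hpos : ∀ b, 0 < σ b)
    (hdenom : ∀ b, ∃ k : ℤ, σ b = (k : ℚ) / m)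
    (hnew : ∀ b : Bnew, 1 + 1 / (m : ℚ) ≤ σ (Sum.inl b))
    (hvc : (1 : ℚ) = ∑ b : Bnew, (σ (Sum.inl b) - 1) + ∑ b : Bprim, σ (Sum.inr b)) :
    (∀ b, ¬ ∃ n : ℤ, σ b = (n : ℚ)) ∧ ∑ b, Int.fract (σ b) = 1 := by
  have hmQ : (0:ℚ) < (m:ℚ) := by exact_mod_cast Nat.lt_of_lt_of_le Nat.zero_lt_one hm
  have h1m : (0:ℚ) < 1 / m := by positivity
  have hcard : 1 < Fintype.card Bprim := by omega
  have hne : Nonempty Bprim := Fintype.card_pos_iff.mp (by omega)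
  have hprimsum_pos : 0 < ∑ b : Bprim, σ (Sum.inr b) :=
    Finset.sum_pos (fun b _ => hpos _) Finset.univ_nonempty
  have hnewsum_nonneg : 0 ≤ ∑ b : Bnew, (σ (Sum.inl b) - 1) :=
    Finset.sum_nonneg fun b _ => by linarith [hnew b]
  have hprim_lt : ∀ b : Bprim, σ (Sum.inr b) < 1 := by
    intro b
    obtain ⟨c, hc⟩ := Fintype.exists_ne_of_one_lt_card hcard b
    have h1 : σ (Sum.inr b) < ∑ b : Bprim, σ (Sum.inr b) :=
      Finset.single_lt_sum hc (Finset.mem_univ b) (Finset.mem_univ c)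
        (hpos _) (fun k _ _ => le_of_lt (hpos _))
    linarith
  have hnew_lt : ∀ b : Bnew, σ (Sum.inl b) < 2 := by
    intro b
    have h1 : σ (Sum.inl b) - 1 ≤ ∑ b : Bnew, (σ (Sum.inl b) - 1) :=
      Finset.single_le_sum (f := fun b => σ (Sum.inl b) - 1)
        (fun c _ => by show (0:ℚ) ≤ σ (Sum.inl c) - 1; linarith [hnew c]) (Finset.mem_univ b)
    linarith
  have hfnew : ∀ b : Bnew, Int.fract (σ (Sum.inl b)) = σ (Sum.inl b) - 1 := by
    intro b
    have h1 : 1 + 1/(m:ℚ) ≤ σ (Sum.inl b) := hnew b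
    have h2 := hnew_lt b
    rw [← Int.fract_sub_intCast (σ (Sum.inl b)) 1]
    push_cast
    rw [Int.fract_eq_self.mpr ⟨by linarith, by linarith⟩]
  have hfprim : ∀ b : Bprim, Int.fract (σ (Sum.inr b)) = σ (Sum.inr b) :=
    fun b => Int.fract_eq_self.mpr ⟨le_of_lt (hpos _), hprim_lt b⟩
  constructor
  · rintro b ⟨n, hn⟩
    have h0 : Int.fract (σ b) = 0 := by rw [hn]; exact Int.fract_intCast n
    cases b with
    | inl b => rw [hfnew b] at h0; have := hnew b; linarith
    | inr b => rw [hfprim b] at h0; have := hpos (Sum.inr b); linarith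
  · rw [Fintype.sum_sum_type]
    simp only [hfnew, hfprim]
    linarith [hvc]
end

section
/- Let G be a finite group with a cyclic p-Sylow subgroup, and suppose p divides the order of the center Z(G). Then G has a nontrivial quotient which is a p-group. Conversely (trivially), if G has no nontrivial p-group quotient and has cyclic p-Sylow subgroup, then p does not divide |Z(G)|, so any subgroup of Z(G) has order prime to p and, being a subgroup of an abelian group that embeds in Z(G), any cyclic subgroup of Z(G) has order dividing the exponent of Z(G). -/
/-- `G` has a nontrivial quotient which is a `p`-group. -/
def HasNontrivialPGroupQuotient (p : ℕ) (G : Type*) [Group G] : Prop :=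
  ∃ N : Subgroup G, ∃ h : N.Normal,
    letI := h
    Nontrivial (G ⧸ N) ∧ IsPGroup p (G ⧸ N)

theorem aux_main (p : ℕ) [Fact p.Prime] (G : Type*) [Group G] [Finite G]
    (P : Sylow p G) (hcyc : IsCyclic P)
    (hdvd : p ∣ Nat.card (Subgroup.center G)) : HasNontrivialPGroupQuotient p G := by
  obtain ⟨z, hz⟩ := exists_prime_orderOf_dvd_card' (G := Subgroup.center G) p hdvd
  have hzc : (z : G) ∈ Subgroup.center G := z.2
  have hzord : orderOf (z : G) = p := by rw [Subgroup.orderOf_coe, hz]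
  -- z ∈ P
  have hK : IsPGroup p (Subgroup.zpowers (z : G)) := by
    apply IsPGroup.of_card (n := 1)
    rw [Nat.card_zpowers, hzord, pow_one]
  have hKnormal : (Subgroup.zpowers (z : G)).Normal := by
    constructor
    intro n hn g
    obtain ⟨k, rfl⟩ := hn
    have hc := (Subgroup.mem_center_iff.mp ((Subgroup.center G).zpow_mem hzc k)) g
    have : g * (z : G) ^ k * g⁻¹ = (z : G) ^ k := by
      rw [hc, mul_assoc, mul_inv_cancel, mul_one]
    rw [this]
    exact Subgroup.zpow_mem _ (Subgroup.mem_zpowers _) k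
  have hsup : IsPGroup p ((P : Subgroup G) ⊔ Subgroup.zpowers (z : G) : Subgroup G) :=
    P.2.to_sup_of_normal_right hK
  have hle : ((P : Subgroup G) ⊔ Subgroup.zpowers (z : G)) ≤ P := by
    rw [P.3 hsup le_sup_left]
  have hzP : (z : G) ∈ P := hle (Subgroup.mem_sup_right (Subgroup.mem_zpowers _))
  -- transfer
  letI : CommGroup (P : Subgroup G) := hcyc.commGroup
  let f : G →* (P : Subgroup G) := MonoidHom.transfer (MonoidHom.id (P : Subgroup G))
  have key : ∀ (k : ℕ) (g₀ : G), g₀⁻¹ * (z : G) ^ k * g₀ ∈ (P : Subgroup G) →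
      g₀⁻¹ * (z : G) ^ k * g₀ = (z : G) ^ k := by
    intro k g₀ _
    have := (Subgroup.mem_center_iff.mp ((Subgroup.center G).pow_mem hzc k)) g₀⁻¹
    rw [this, mul_assoc, inv_mul_cancel, mul_one]
  have hfz : f (z : G) = MonoidHom.id (P : Subgroup G)
      ⟨(z : G) ^ (P : Subgroup G).index, MonoidHom.transfer_eq_pow_aux (z : G) key⟩ :=
    MonoidHom.transfer_eq_pow (MonoidHom.id (P : Subgroup G)) (z : G) key
  have hfz1 : f (z : G) ≠ 1 := by
    rw [hfz]
    intro h
    have h2 : (z : G) ^ (P : Subgroup G).index = 1 := by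
      have := congrArg (Subtype.val) h
      simpa using this
    have := orderOf_dvd_of_pow_eq_one h2
    rw [hzord] at this
    exact P.not_dvd_index this
  refine ⟨f.ker, f.normal_ker, ?_, ?_⟩
  · have : Nontrivial f.range := by
      refine ⟨⟨1, ⟨f (z : G), ⟨z, rfl⟩⟩, ?_⟩⟩
      intro h
      exact hfz1 (by simpa using congrArg Subtype.val h.symm)
    exact (QuotientGroup.quotientKerEquivRange f).toEquiv.nontrivial
  · exact (P.2.to_subgroup f.range).of_equiv (QuotientGroup.quotientKerEquivRange f).symm

/-- let `G` be a finite group with cyclic `p`-Sylow subgroup.  If `p` divides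
`|Z(G)|`, then `G` has a nontrivial `p`-group quotient.  Conversely (trivially), if `G` has no
nontrivial `p`-group quotient, then `p ∤ |Z(G)|`, every subgroup of `Z(G)` has order prime to
`p`, and every cyclic subgroup of `Z(G)` has order dividing the exponent of `Z(G)`. -/
theorem stmt16 (p : ℕ) [Fact p.Prime] (G : Type*) [Group G] [Finite G]
    (P : Sylow p G) (hcyc : IsCyclic P) :
    (p ∣ Nat.card (Subgroup.center G) → HasNontrivialPGroupQuotient p G) ∧
    (¬ HasNontrivialPGroupQuotient p G →
      ¬ p ∣ Nat.card (Subgroup.center G) ∧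
      (∀ H : Subgroup G, H ≤ Subgroup.center G → ¬ p ∣ Nat.card H) ∧
      (∀ H : Subgroup G, H ≤ Subgroup.center G → IsCyclic H →
        Nat.card H ∣ Monoid.exponent (Subgroup.center G))) := by
  refine ⟨aux_main p G P hcyc, fun hno => ⟨fun h => hno (aux_main p G P hcyc h), ?_, ?_⟩⟩
  · intro H hH hdvd
    exact hno (aux_main p G P hcyc (hdvd.trans (Subgroup.card_dvd_of_le hH)))
  · intro H hH hHcyc
    obtain ⟨g, hg⟩ := hHcyc.exists_generator
    have htop : Subgroup.zpowers g = ⊤ := (Subgroup.eq_top_iff' _).mpr hg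
    have hcard : Nat.card H = orderOf g := by
      rw [← Nat.card_zpowers, htop, Subgroup.card_top]
    have hord : orderOf g = orderOf (⟨(g : G), hH g.2⟩ : Subgroup.center G) := by
      rw [← Subgroup.orderOf_coe g, ← Subgroup.orderOf_coe (⟨(g : G), hH g.2⟩ : Subgroup.center G)]
    rw [hcard, hord]
    exact Monoid.order_dvd_exponent _
end
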